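/- arXiv:2512.24005 — 2 statements merged into one kernel-verified Lean document; each statement's English description precedes it below -/
import Mathlib

section
/- Let μ, σ, ξ : ℝ → ℝ be continuous on [0,1], let c ≥ 0, and let D : [0,1] → ℝ be differentiable with D'(s) = 2·μ(s)·D(s) + σ(s)² + c·ξ(s)² for all s ∈ (0,1). Define G(s,t) := E(s,t)·D(s) for 0 ≤ s ≤ t ≤ 1, where E(s,t) := exp(∫_s^t μ(r) dr). Then for all 0 < s < t ≤ 1, σ(s)² + c·ξ(s)² = exp(−∫_s^t μ(r) dr)·∂_s G(s,t) − μ(s)·D(s), where ∂_s G denotes the partial derivative of G with respect to its first argument. -/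
open Real MeasureTheory intervalIntegral Set

/-- Inversion identity (3.8) of Proposition 3.2: with `G s t = exp (∫_s^t μ) * D s` and
`D` satisfying the second-moment ODE on `(0,1)`, for all `0 < s < t ≤ 1`,
`σ s ^ 2 + c * ξ s ^ 2 = exp (−∫_s^t μ) * ∂_s G(s,t) − μ s * D s`,
where `∂_s G` is the derivative of `G` in its first argument. -/
theorem stmt_5 (μ σ ξ D : ℝ → ℝ) (c : ℝ) (hc : 0 ≤ c)
    (hμ : ContinuousOn μ (Set.Icc 0 1))
    (hσ : ContinuousOn σ (Set.Icc 0 1))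
    (hξ : ContinuousOn ξ (Set.Icc 0 1))
    (hD : ∀ s ∈ Set.Ioo (0:ℝ) 1,
      HasDerivAt D (2 * μ s * D s + σ s ^ 2 + c * ξ s ^ 2) s) :
    ∀ s t : ℝ, 0 < s → s < t → t ≤ 1 →
      σ s ^ 2 + c * ξ s ^ 2 =
        Real.exp (-∫ r in s..t, μ r) *
          deriv (fun u => Real.exp (∫ r in u..t, μ r) * D u) s - μ s * D s := by
  intro s t hs hst ht1
  have hsmem : s ∈ Set.Ioo (0:ℝ) 1 := ⟨hs, lt_of_lt_of_le hst ht1⟩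
  have hnhds : Set.Icc (0:ℝ) 1 ∈ nhds s :=
    mem_nhds_iff.2 ⟨Set.Ioo 0 1, Set.Ioo_subset_Icc_self, isOpen_Ioo, hsmem⟩
  have hμcont : ContinuousAt μ s := hμ.continuousAt hnhds
  have hint : IntervalIntegrable μ volume s t := by
    apply (hμ.mono _).intervalIntegrable
    rw [Set.uIcc_of_le hst.le]
    exact Set.Icc_subset_Icc hs.le ht1
  have hI : HasDerivAt (fun u => ∫ r in u..t, μ r) (-μ s) s :=
    intervalIntegral.integral_hasDerivAt_left hint
      (ContinuousOn.stronglyMeasurableAtFilter isOpen_Ioo (hμ.mono Set.Ioo_subset_Icc_self) s hsmem) hμcont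
  have hE : HasDerivAt (fun u => Real.exp (∫ r in u..t, μ r))
      (Real.exp (∫ r in s..t, μ r) * (-μ s)) s := hI.exp
  have hG : HasDerivAt (fun u => Real.exp (∫ r in u..t, μ r) * D u)
      (Real.exp (∫ r in s..t, μ r) * (-μ s) * D s +
        Real.exp (∫ r in s..t, μ r) * (2 * μ s * D s + σ s ^ 2 + c * ξ s ^ 2)) s :=
    hE.mul (hD s hsmem)
  rw [hG.deriv, Real.exp_neg]
  have hpos := Real.exp_pos (∫ r in s..t, μ r)
  field_simp
  ring
end

section
/- Let M, C_g, C_D ≥ 0 and ε_μ, ε_g, ε_D ≥ 0. Let μ, μ̂ : ℝ → ℝ be continuous on [0,1] with |μ(r)| ≤ M and |μ̂(r)| ≤ M for all r ∈ [0,1], and |μ̂(r) − μ(r)| ≤ ε_μ for all r ∈ [0,1]. Let g, ĝ : ℝ × ℝ → ℝ be continuous on [0,1] × [0,1] with |g(t,τ)| ≤ C_g and |ĝ(t,τ) − g(t,τ)| ≤ ε_g for all (t,τ) ∈ [0,1]². Let D, D̂ : [0,1] → ℝ with |D(t)| ≤ C_D and |D̂(t) − D(t)| ≤ ε_D for all t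 ∈ [0,1]. Define, for t ∈ [0,1), H(t) := (1/(1−t)) · ∫_t^1 exp(−∫_t^τ μ(r) dr)·g(t,τ) dτ − μ(t)·D(t), and Ĥ(t) := (1/(1−t)) · ∫_t^1 exp(−∫_t^τ μ̂(r) dr)·ĝ(t,τ) dτ − μ̂(t)·D̂(t). Then for every t ∈ [0,1), |Ĥ(t) − H(t)| ≤ e^M·C_g·ε_μ + e^M·ε_g + (C_D + ε_D)·ε_μ + M·ε_D. -/
open Real intervalIntegral

lemma exp_lip {C x y : ℝ} (hx : x ≤ C) (hy : y ≤ C) :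
    |Real.exp x - Real.exp y| ≤ Real.exp C * |x - y| := by
  wlog h : y ≤ x generalizing x y
  · have := this hy hx (le_of_not_ge h)
    rwa [abs_sub_comm, abs_sub_comm x y]
  rw [abs_of_nonneg (sub_nonneg.2 (Real.exp_le_exp.2 h)), abs_of_nonneg (sub_nonneg.2 h)]
  have h1 : Real.exp x - Real.exp y = Real.exp y * (Real.exp (x - y) - 1) := by
    rw [mul_sub, ← Real.exp_add]; ring_nf
  have h2 : Real.exp (x - y) - 1 ≤ (x - y) * Real.exp (x - y) := by
    have h3 : Real.exp (-(x - y)) * Real.exp (x - y) = 1 := by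
      rw [← Real.exp_add]; simp
    have h4 := Real.add_one_le_exp (-(x - y))
    nlinarith [Real.exp_pos (x - y)]
  calc Real.exp x - Real.exp y ≤ Real.exp y * ((x - y) * Real.exp (x - y)) := by
        rw [h1]; exact mul_le_mul_of_nonneg_left h2 (Real.exp_pos y).le
    _ = Real.exp x * (x - y) := by
        rw [show Real.exp y * ((x - y) * Real.exp (x - y)) =
          Real.exp y * Real.exp (x - y) * (x - y) from by ring, ← Real.exp_add]; ring_nf
    _ ≤ Real.exp C * (x - y) := mul_le_mul_of_nonneg_right (Real.exp_le_exp.2 hx)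
        (sub_nonneg.2 h)

/-- Quantitative deterministic stability bound underlying the proof of Theorem 5.3(iii):
the plug-in functional `Ĥ` built from `μ̂`, `ĝ`, `D̂` deviates from the true functional
`H` built from `μ`, `g`, `D` by at most
`e^M·C_g·ε_μ + e^M·ε_g + (C_D + ε_D)·ε_μ + M·ε_D` on `[0,1)`. -/
theorem stmt_11 (M Cg CD εμ εg εD : ℝ)
    (hM : 0 ≤ M) (hCg : 0 ≤ Cg) (hCD : 0 ≤ CD)
    (hεμ : 0 ≤ εμ) (hεg : 0 ≤ εg) (hεD : 0 ≤ εD)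
    (μ μhat : ℝ → ℝ)
    (hμc : ContinuousOn μ (Set.Icc 0 1)) (hμhatc : ContinuousOn μhat (Set.Icc 0 1))
    (hμb : ∀ r ∈ Set.Icc (0:ℝ) 1, |μ r| ≤ M)
    (hμhatb : ∀ r ∈ Set.Icc (0:ℝ) 1, |μhat r| ≤ M)
    (hμerr : ∀ r ∈ Set.Icc (0:ℝ) 1, |μhat r - μ r| ≤ εμ)
    (g ghat : ℝ × ℝ → ℝ)
    (hgc : ContinuousOn g (Set.Icc 0 1 ×ˢ Set.Icc 0 1))
    (hghatc : ContinuousOn ghat (Set.Icc 0 1 ×ˢ Set.Icc 0 1))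
    (hgb : ∀ p ∈ Set.Icc (0:ℝ) 1 ×ˢ Set.Icc (0:ℝ) 1, |g p| ≤ Cg)
    (hgerr : ∀ p ∈ Set.Icc (0:ℝ) 1 ×ˢ Set.Icc (0:ℝ) 1, |ghat p - g p| ≤ εg)
    (D Dhat : ℝ → ℝ)
    (hDb : ∀ t ∈ Set.Icc (0:ℝ) 1, |D t| ≤ CD)
    (hDerr : ∀ t ∈ Set.Icc (0:ℝ) 1, |Dhat t - D t| ≤ εD) :
    ∀ t ∈ Set.Ico (0:ℝ) 1,
      |((1 / (1 - t)) * (∫ τ in t..1,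
          Real.exp (-∫ r in t..τ, μhat r) * ghat (t, τ)) - μhat t * Dhat t) -
       ((1 / (1 - t)) * (∫ τ in t..1,
          Real.exp (-∫ r in t..τ, μ r) * g (t, τ)) - μ t * D t)| ≤
        Real.exp M * Cg * εμ + Real.exp M * εg + (CD + εD) * εμ + M * εD := by
  intro t ht
  obtain ⟨ht0, ht1⟩ := ht
  have h1t : (0:ℝ) < 1 - t := by linarith
  have htle : t ≤ 1 := ht1.le
  have htmem : t ∈ Set.Icc (0:ℝ) 1 := ⟨ht0, htle⟩
  have hsub : Set.Icc t 1 ⊆ Set.Icc (0:ℝ) 1 := Set.Icc_subset_Icc ht0 le_rfl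
  have huIcc : Set.uIcc t 1 = Set.Icc t 1 := Set.uIcc_of_le htle
  -- integrability of inner integrands over [t,1]
  have key : ∀ (ν : ℝ → ℝ) (G : ℝ × ℝ → ℝ), ContinuousOn ν (Set.Icc 0 1) →
      ContinuousOn G (Set.Icc 0 1 ×ˢ Set.Icc 0 1) →
      IntervalIntegrable (fun τ => Real.exp (-∫ r in t..τ, ν r) * G (t, τ)) MeasureTheory.volume t 1 := by
    intro ν G hνc hGc
    apply ContinuousOn.intervalIntegrable
    rw [huIcc]
    have hνint : MeasureTheory.IntegrableOn ν (Set.uIcc t 1) :=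
      ((hνc.mono hsub).integrableOn_Icc).mono_set (by rw [huIcc])
    have hprim : ContinuousOn (fun τ => ∫ r in t..τ, ν r) (Set.Icc t 1) := by
      have := intervalIntegral.continuousOn_primitive_interval (f := ν)
        (a := t) (b := 1) (μ := MeasureTheory.volume) hνint
      rwa [huIcc] at this
    have hG : ContinuousOn (fun τ => G (t, τ)) (Set.Icc t 1) := by
      apply hGc.comp (Continuous.continuousOn (by continuity))
      intro τ hτ
      exact ⟨htmem, hsub hτ⟩
    exact ((Real.continuous_exp.comp_continuousOn hprim.neg).mul hG)
  have hFint := key μ g hμc hgc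
  have hFhatint := key μhat ghat hμhatc hghatc
  -- pointwise bound on the difference of integrands
  have hpt : ∀ τ ∈ Set.uIoc t 1,
      ‖Real.exp (-∫ r in t..τ, μhat r) * ghat (t, τ) -
        Real.exp (-∫ r in t..τ, μ r) * g (t, τ)‖ ≤ Real.exp M * Cg * εμ + Real.exp M * εg := by
    intro τ hτ
    rw [Set.uIoc_of_le htle] at hτ
    obtain ⟨hτ1, hτ2⟩ := hτ
    have hτmem : τ ∈ Set.Icc (0:ℝ) 1 := ⟨le_trans ht0 hτ1.le, hτ2⟩
    have hτt : τ - t ≤ 1 := by linarith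
    have hτt0 : 0 ≤ τ - t := by linarith
    set a := ∫ r in t..τ, μhat r with ha
    set b := ∫ r in t..τ, μ r with hb
    have hsub2 : Set.uIoc t τ ⊆ Set.Icc (0:ℝ) 1 := by
      rw [Set.uIoc_of_le hτ1.le]
      intro x hx; exact ⟨le_trans ht0 hx.1.le, le_trans hx.2 hτ2⟩
    have hab : |a| ≤ M := by
      calc |a| = ‖∫ r in t..τ, μhat r‖ := (Real.norm_eq_abs _).symm
        _ ≤ M * |τ - t| := intervalIntegral.norm_integral_le_of_norm_le_const
            (fun x hx => by rw [Real.norm_eq_abs]; exact hμhatb x (hsub2 hx))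
        _ ≤ M * 1 := by
            apply mul_le_mul_of_nonneg_left _ hM; rw [abs_of_nonneg hτt0]; exact hτt
        _ = M := mul_one M
    have hbb : |b| ≤ M := by
      calc |b| = ‖∫ r in t..τ, μ r‖ := (Real.norm_eq_abs _).symm
        _ ≤ M * |τ - t| := intervalIntegral.norm_integral_le_of_norm_le_const
            (fun x hx => by rw [Real.norm_eq_abs]; exact hμb x (hsub2 hx))
        _ ≤ M * 1 := by
            apply mul_le_mul_of_nonneg_left _ hM; rw [abs_of_nonneg hτt0]; exact hτt
        _ = M := mul_one M
    have hsubIcc : Set.uIcc t τ ⊆ Set.Icc (0:ℝ) 1 := by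
      rw [Set.uIcc_of_le hτ1.le]
      exact Set.Icc_subset_Icc ht0 hτ2
    have habdiff : |a - b| ≤ εμ := by
      have hint1 : IntervalIntegrable μhat MeasureTheory.volume t τ :=
        (hμhatc.mono hsubIcc).intervalIntegrable
      have hint2 : IntervalIntegrable μ MeasureTheory.volume t τ :=
        (hμc.mono hsubIcc).intervalIntegrable
      have hab2 : a - b = ∫ r in t..τ, (μhat r - μ r) := by
        rw [intervalIntegral.integral_sub hint1 hint2]
      rw [hab2]
      calc |∫ r in t..τ, (μhat r - μ r)| = ‖∫ r in t..τ, (μhat r - μ r)‖ :=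
            (Real.norm_eq_abs _).symm
        _ ≤ εμ * |τ - t| :=
            intervalIntegral.norm_integral_le_of_norm_le_const
              (fun x hx => by rw [Real.norm_eq_abs]; exact hμerr x (hsub2 hx))
        _ ≤ εμ * 1 := by
            apply mul_le_mul_of_nonneg_left _ hεμ; rw [abs_of_nonneg hτt0]; exact hτt
        _ = εμ := mul_one εμ
    have hexp : |Real.exp (-a) - Real.exp (-b)| ≤ Real.exp M * εμ := by
      have h1 : -a ≤ M := by cases abs_le.1 hab; linarith
      have h2 : -b ≤ M := by cases abs_le.1 hbb; linarith
      calc |Real.exp (-a) - Real.exp (-b)| ≤ Real.exp M * |(-a) - (-b)| := exp_lip h1 h2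
        _ = Real.exp M * |a - b| := by rw [← abs_neg]; ring_nf
        _ ≤ Real.exp M * εμ := mul_le_mul_of_nonneg_left habdiff (Real.exp_pos M).le
    have hpmem : (t, τ) ∈ Set.Icc (0:ℝ) 1 ×ˢ Set.Icc (0:ℝ) 1 := ⟨htmem, hτmem⟩
    have hexpa : Real.exp (-a) ≤ Real.exp M := by
      apply Real.exp_le_exp.2; cases abs_le.1 hab; linarith
    calc ‖Real.exp (-a) * ghat (t, τ) - Real.exp (-b) * g (t, τ)‖
        = |Real.exp (-a) * (ghat (t, τ) - g (t, τ)) + (Real.exp (-a) - Real.exp (-b)) * g (t, τ)| := by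
          rw [Real.norm_eq_abs]; ring_nf
      _ ≤ |Real.exp (-a) * (ghat (t, τ) - g (t, τ))| + |(Real.exp (-a) - Real.exp (-b)) * g (t, τ)| :=
          abs_add_le _ _
      _ = Real.exp (-a) * |ghat (t, τ) - g (t, τ)| + |Real.exp (-a) - Real.exp (-b)| * |g (t, τ)| := by
          rw [abs_mul, abs_mul, abs_of_nonneg (Real.exp_pos _).le]
      _ ≤ Real.exp M * εg + (Real.exp M * εμ) * Cg :=
          add_le_add
            (mul_le_mul hexpa (hgerr _ hpmem) (abs_nonneg _) (Real.exp_pos M).le)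
            (mul_le_mul hexp (hgb _ hpmem) (abs_nonneg _) (by positivity))
      _ = Real.exp M * Cg * εμ + Real.exp M * εg := by ring
  -- integral part bound
  have hint_bound : |(∫ τ in t..1, Real.exp (-∫ r in t..τ, μhat r) * ghat (t, τ)) -
      (∫ τ in t..1, Real.exp (-∫ r in t..τ, μ r) * g (t, τ))| ≤
      (Real.exp M * Cg * εμ + Real.exp M * εg) * (1 - t) := by
    rw [← intervalIntegral.integral_sub hFhatint hFint]
    have := intervalIntegral.norm_integral_le_of_norm_le_const hpt
    rwa [show |1 - t| = 1 - t from abs_of_nonneg h1t.le] at this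
  -- product part bound
  have hprod : |μhat t * Dhat t - μ t * D t| ≤ (CD + εD) * εμ + M * εD := by
    have hDhat : |Dhat t| ≤ CD + εD := by
      calc |Dhat t| = |(Dhat t - D t) + D t| := by ring_nf
        _ ≤ |Dhat t - D t| + |D t| := abs_add_le _ _
        _ ≤ εD + CD := add_le_add (hDerr t htmem) (hDb t htmem)
        _ = CD + εD := by ring
    calc |μhat t * Dhat t - μ t * D t|
        = |(μhat t - μ t) * Dhat t + μ t * (Dhat t - D t)| := by ring_nf
      _ ≤ |(μhat t - μ t) * Dhat t| + |μ t * (Dhat t - D t)| := abs_add_le _ _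
      _ = |μhat t - μ t| * |Dhat t| + |μ t| * |Dhat t - D t| := by rw [abs_mul, abs_mul]
      _ ≤ εμ * (CD + εD) + M * εD := by
          gcongr
          · exact hμerr t htmem
          · exact hμb t htmem
          · exact hDerr t htmem
      _ = (CD + εD) * εμ + M * εD := by ring
  -- combine
  set A := ∫ τ in t..1, Real.exp (-∫ r in t..τ, μhat r) * ghat (t, τ)
  set B := ∫ τ in t..1, Real.exp (-∫ r in t..τ, μ r) * g (t, τ)
  have h1 : |(1 / (1 - t)) * A - (1 / (1 - t)) * B| ≤ Real.exp M * Cg * εμ + Real.exp M * εg := by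
    rw [← mul_sub, abs_mul, abs_of_pos (by positivity : (0:ℝ) < 1 / (1 - t))]
    rw [div_mul_eq_mul_div, one_mul, div_le_iff₀ h1t]
    calc |A - B| ≤ (Real.exp M * Cg * εμ + Real.exp M * εg) * (1 - t) := hint_bound
      _ = (Real.exp M * Cg * εμ + Real.exp M * εg) * (1 - t) := rfl
  calc |((1 / (1 - t)) * A - μhat t * Dhat t) - ((1 / (1 - t)) * B - μ t * D t)|
      = |((1 / (1 - t)) * A - (1 / (1 - t)) * B) - (μhat t * Dhat t - μ t * D t)| := by ring_nf
    _ ≤ |(1 / (1 - t)) * A - (1 / (1 - t)) * B| + |μhat t * Dhat t - μ t * D t| := abs_sub _ _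
    _ ≤ (Real.exp M * Cg * εμ + Real.exp M * εg) + ((CD + εD) * εμ + M * εD) :=
        add_le_add h1 hprod
    _ = Real.exp M * Cg * εμ + Real.exp M * εg + (CD + εD) * εμ + M * εD := by ring
end
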